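/- Shifted symmetrization in deviation: let G be a (B,1)-Bernstein class (i.e., P g² ≤ B·(P g) for all g∈G) with P g ≥ 0 for all g∈G. Fix constants c_1 > c_2 > 0. If n t ≥ B(1+c_2)²/c_2, then P( sup_{g∈G} (P − (1+c_1)P_n) g ≥ t ) ≤ 2 P( sup_{g∈G} ((1+c_2)P'_n − (1+c_1)P_n) g ≥ t/2 ), where P'_n is the empirical mean over an independent ghost sample of size n. -/

import Mathlib

open MeasureTheory Finset

open ProbabilityTheory ENNReal

lemma pi_map_eval' {𝒵 : Type*} [MeasurableSpace 𝒵] (μ : Measure 𝒵) [IsProbabilityMeasure μ]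
    (n : ℕ) (i : Fin n) :
    (Measure.pi fun _ : Fin n => μ).map (Function.eval i) = μ := by
  ext A hA
  rw [Measure.map_apply (measurable_pi_apply i) hA, Set.eval_preimage,
    Measure.pi_pi]
  rw [Fintype.prod_eq_single i (fun k hk => by simp [Function.update_apply, hk])]
  simp

lemma pi_eval_apply' {𝒵 : Type*} [MeasurableSpace 𝒵] (μ : Measure 𝒵) [IsProbabilityMeasure μ]
    (n : ℕ) (i : Fin n) {A : Set 𝒵} (hA : MeasurableSet A) :
    (Measure.pi fun _ : Fin n => μ) (Function.eval i ⁻¹' A) = μ A := by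
  have h2 := Measure.map_apply (μ := Measure.pi fun _ : Fin n => μ)
    (measurable_pi_apply i) hA
  rw [pi_map_eval'] at h2
  exact h2.symm

lemma indep_eval' {𝒵 : Type*} [MeasurableSpace 𝒵] (μ : Measure 𝒵) [IsProbabilityMeasure μ]
    (n : ℕ) (i j : Fin n) (hij : i ≠ j) :
    IndepFun (Function.eval i) (Function.eval j) (Measure.pi fun _ : Fin n => μ) := by
  rw [ProbabilityTheory.indepFun_iff_measure_inter_preimage_eq_mul]
  intro A B hA hB
  have h1 : Function.eval i ⁻¹' A ∩ Function.eval j ⁻¹' B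
      = Set.pi Set.univ
        (Function.update (Function.update (fun _ : Fin n => (Set.univ : Set 𝒵)) i A) j B) := by
    ext y
    simp only [Set.mem_inter_iff, Set.mem_preimage, Set.mem_pi, Set.mem_univ, true_implies,
      Function.update_apply]
    constructor
    · rintro ⟨h1, h2⟩ k
      split_ifs with hkj hki
      · exact hkj ▸ h2
      · exact hki ▸ h1
      · trivial
    · intro h
      refine ⟨?_, ?_⟩
      · have := h i
        rw [if_neg hij, if_pos rfl] at this
        exact this
      · have := h j
        rw [if_pos rfl] at this
        exact this
  rw [h1, pi_eval_apply' μ n i hA, pi_eval_apply' μ n j hB, Measure.pi_pi]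
  rw [Finset.prod_eq_mul i j hij
    (fun k _ hk => by simp [Function.update_apply, hk.1, hk.2])
    (fun h => absurd (Finset.mem_univ i) h) (fun h => absurd (Finset.mem_univ j) h)]
  simp [Function.update_apply, hij]

lemma cheb' {𝒵 : Type*} [MeasurableSpace 𝒵] (μ : Measure 𝒵) [IsProbabilityMeasure μ]
    (n : ℕ) (hn : 0 < n) (g : 𝒵 → ℝ) (hg : Measurable g)
    (hInt2 : Integrable (fun z => g z ^ 2) μ)
    (V : ℝ) (hV : ∫ z, g z ^ 2 ∂μ ≤ V) (s : ℝ) (hs : 0 < s)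
    (hhalf : V ≤ n * s ^ 2 / 2) :
    (Measure.pi fun _ : Fin n => μ)
      {y | (n : ℝ)⁻¹ * ∑ i, g (y i) < (∫ x, g x ∂μ) - s} ≤ 1 / 2 := by
  set ν := Measure.pi fun _ : Fin n => μ with hνdef
  set m := ∫ x, g x ∂μ with hm
  set Xi : Fin n → (Fin n → 𝒵) → ℝ := fun i y => g (y i) with hXi
  have hXi_meas : ∀ i, Measurable (Xi i) := fun i => hg.comp (measurable_pi_apply i)
  have hg_mem : MemLp g 2 μ := (memLp_two_iff_integrable_sq hg.aestronglyMeasurable).2 hInt2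
  have hXi_mem : ∀ i, MemLp (Xi i) 2 ν := fun i => by
    have := (memLp_map_measure_iff hg.aestronglyMeasurable
      (measurable_pi_apply i).aemeasurable (p := 2)).1
      (by rw [pi_map_eval' μ n i]; exact hg_mem)
    exact this
  have hXi_int : ∀ i, Integrable (Xi i) ν := fun i => (hXi_mem i).integrable one_le_two
  have hEXi : ∀ i, ∫ y, Xi i y ∂ν = m := fun i => by
    have := integral_map (μ := ν) (φ := fun y => y i)
      (measurable_pi_apply i).aemeasurable hg.aestronglyMeasurable
    rw [show Measure.map (fun y => y i) ν = μ from pi_map_eval' μ n i] at this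
    exact this.symm
  have hE2 : ∀ i, ∫ y, Xi i y ^ 2 ∂ν = ∫ x, g x ^ 2 ∂μ := fun i => by
    have := integral_map (μ := ν) (φ := fun y => y i)
      (measurable_pi_apply i).aemeasurable
      (f := fun x => g x ^ 2) ((hg.pow_const 2).aestronglyMeasurable)
    rw [show Measure.map (fun y => y i) ν = μ from pi_map_eval' μ n i] at this
    exact this.symm
  have hvar : ∀ i, variance (Xi i) ν ≤ V := fun i => by
    rw [variance_eq_sub (hXi_mem i)]
    simp only [Pi.pow_apply]
    have h2 := hE2 i
    have h1 := hEXi i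
    nlinarith [sq_nonneg (∫ y, Xi i y ∂ν)]
  set X : (Fin n → 𝒵) → ℝ := ∑ i, Xi i with hX
  have hXapp : ∀ y, X y = ∑ i, g (y i) := fun y => by
    rw [hX, Finset.sum_apply]
  have hXmem : MemLp X 2 ν := memLp_finset_sum' _ fun i _ => hXi_mem i
  have hindep : Set.Pairwise ↑(Finset.univ : Finset (Fin n))
      fun i j => IndepFun (Xi i) (Xi j) ν :=
    fun i _ j _ hij => (indep_eval' μ n i j hij).comp hg hg
  have hvarsum : variance X ν ≤ n * V := by
    rw [hX, IndepFun.variance_sum (fun i _ => hXi_mem i) hindep]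
    calc ∑ i : Fin n, variance (Xi i) ν ≤ ∑ _i : Fin n, V :=
          Finset.sum_le_sum fun i _ => hvar i
      _ = n * V := by simp [Finset.sum_const, nsmul_eq_mul]
  have hEX : ∫ y, X y ∂ν = n * m := by
    rw [hX]
    have : ∫ y, (∑ i, Xi i) y ∂ν = ∑ i : Fin n, ∫ y, Xi i y ∂ν := by
      simp only [Finset.sum_apply]
      exact integral_finset_sum _ fun i _ => hXi_int i
    rw [this]
    simp [hEXi, Finset.sum_const, nsmul_eq_mul]
  have hn' : (0 : ℝ) < n := Nat.cast_pos.2 hn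
  have hc : (0 : ℝ) < n * s := mul_pos hn' hs
  have hcheb := meas_ge_le_variance_div_sq hXmem hc
  have hsub : {y | (n : ℝ)⁻¹ * ∑ i, g (y i) < m - s}
      ⊆ {y | n * s ≤ |X y - ∫ y, X y ∂ν|} := by
    intro y hy
    simp only [Set.mem_setOf_eq] at hy ⊢
    rw [hEX, hXapp]
    have h1 : ∑ i, g (y i) < n * (m - s) := by
      have := mul_lt_mul_of_pos_left hy hn'
      rwa [← mul_assoc, mul_inv_cancel₀ hn'.ne', one_mul] at this
    have : n * s ≤ -((∑ i, g (y i)) - n * m) := by nlinarith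
    exact this.trans (neg_le_abs _)
  have hbound : ENNReal.ofReal (variance X ν / (n * s) ^ 2) ≤ 1 / 2 := by
    have h1 : variance X ν / (n * s) ^ 2 ≤ 1 / 2 := by
      rw [div_le_iff₀ (by positivity)]
      nlinarith [hvarsum, hhalf, mul_le_mul_of_nonneg_left hhalf hn'.le]
    calc ENNReal.ofReal (variance X ν / (n * s) ^ 2) ≤ ENNReal.ofReal (1 / 2) :=
          ENNReal.ofReal_le_ofReal h1
      _ = 1 / 2 := by
          rw [ENNReal.ofReal_div_of_pos (by norm_num)]
          norm_num
  exact le_trans (le_trans (measure_mono hsub) hcheb) hbound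

/-- Shifted symmetrization in deviation: if `G` is a `(B,1)`-Bernstein class with nonnegative
means, `c₁ > c₂ > 0` and `n t ≥ B (1+c₂)²/c₂`, then
`P(sup_g (P - (1+c₁)Pₙ) g ≥ t) ≤ 2 P(sup_g ((1+c₂)P'ₙ - (1+c₁)Pₙ) g ≥ t/2)`,
where `Pₙ, P'ₙ` are empirical means over two independent i.i.d. samples of size `n`. -/
theorem shifted_symmetrization_deviation {𝒵 : Type*} [MeasurableSpace 𝒵]
    (μ : Measure 𝒵) [IsProbabilityMeasure μ]
    (n : ℕ) (hn : 0 < n) (G : Finset (𝒵 → ℝ)) (hG : G.Nonempty)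
    (hmeas : ∀ g ∈ G, Measurable g)
    (hInt : ∀ g ∈ G, Integrable g μ)
    (hInt2 : ∀ g ∈ G, Integrable (fun z => (g z) ^ 2) μ)
    (B c₁ c₂ t : ℝ) (hc₂ : 0 < c₂) (hc : c₂ < c₁)
    (hBern : ∀ g ∈ G, ∫ z, (g z) ^ 2 ∂μ ≤ B * ∫ z, g z ∂μ)
    (hpos : ∀ g ∈ G, 0 ≤ ∫ z, g z ∂μ)
    (hnt : B * (1 + c₂) ^ 2 / c₂ ≤ n * t) :
    (Measure.pi fun _ : Fin n => μ)
        {z | t ≤ G.sup' hG fun g =>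
          (∫ x, g x ∂μ) - (1 + c₁) * ((n : ℝ)⁻¹ * ∑ i, g (z i))} ≤
      2 * ((Measure.pi fun _ : Fin n => μ).prod (Measure.pi fun _ : Fin n => μ))
        {p | t / 2 ≤ G.sup' hG fun g =>
          (1 + c₂) * ((n : ℝ)⁻¹ * ∑ i, g (p.2 i)) -
            (1 + c₁) * ((n : ℝ)⁻¹ * ∑ i, g (p.1 i))} := by
  classical
  set ν := Measure.pi fun _ : Fin n => μ with hνdef
  set D : Set ((Fin n → 𝒵) × (Fin n → 𝒵)) :=
    {p | t / 2 ≤ G.sup' hG fun g =>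
      (1 + c₂) * ((n : ℝ)⁻¹ * ∑ i, g (p.2 i)) -
        (1 + c₁) * ((n : ℝ)⁻¹ * ∑ i, g (p.1 i))} with hDdef
  set E : Set (Fin n → 𝒵) :=
    {z | t ≤ G.sup' hG fun g =>
      (∫ x, g x ∂μ) - (1 + c₁) * ((n : ℝ)⁻¹ * ∑ i, g (z i))} with hEdef
  have hc2' : (0 : ℝ) < 1 + c₂ := by linarith
  have hn' : (0 : ℝ) < n := Nat.cast_pos.2 hn
  by_cases ht : 0 < t
  · -- main case
    have hD : MeasurableSet D := by
      have hF : Measurable fun p : (Fin n → 𝒵) × (Fin n → 𝒵) =>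
          G.sup' hG fun g =>
            (1 + c₂) * ((n : ℝ)⁻¹ * ∑ i, g (p.2 i)) -
              (1 + c₁) * ((n : ℝ)⁻¹ * ∑ i, g (p.1 i)) := by
        have : ∀ g ∈ G, Measurable fun p : (Fin n → 𝒵) × (Fin n → 𝒵) =>
            (1 + c₂) * ((n : ℝ)⁻¹ * ∑ i, g (p.2 i)) -
              (1 + c₁) * ((n : ℝ)⁻¹ * ∑ i, g (p.1 i)) := by
          intro g hg
          have h2 : Measurable fun p : (Fin n → 𝒵) × (Fin n → 𝒵) => ∑ i, g (p.2 i) :=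
            Finset.measurable_sum _ fun i _ =>
              ((hmeas g hg).comp ((measurable_pi_apply i).comp measurable_snd))
          have h1 : Measurable fun p : (Fin n → 𝒵) × (Fin n → 𝒵) => ∑ i, g (p.1 i) :=
            Finset.measurable_sum _ fun i _ =>
              ((hmeas g hg).comp ((measurable_pi_apply i).comp measurable_fst))
          exact ((measurable_const.mul h2).const_mul _).sub
            ((measurable_const.mul h1).const_mul _)
        have := Finset.measurable_sup' hG this
        convert this using 1
        funext p
        rw [Finset.sup'_apply]
      exact measurableSet_le measurable_const hF
    have key : ∀ z ∈ E, (1 : ℝ≥0∞) / 2 ≤ ν (Prod.mk z ⁻¹' D) := by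
      intro z hz
      obtain ⟨g, hgG, hgeq⟩ := Finset.exists_mem_eq_sup' hG
        (fun g => (∫ x, g x ∂μ) - (1 + c₁) * ((n : ℝ)⁻¹ * ∑ i, g (z i)))
      have hzg : t ≤ (∫ x, g x ∂μ) - (1 + c₁) * ((n : ℝ)⁻¹ * ∑ i, g (z i)) := by
        have : t ≤ G.sup' hG
            (fun g => (∫ x, g x ∂μ) - (1 + c₁) * ((n : ℝ)⁻¹ * ∑ i, g (z i))) := hz
        rwa [hgeq] at this
      set m := ∫ x, g x ∂μ with hmdef
      set s := (c₂ * m + t / 2) / (1 + c₂) with hsdef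
      have hm : 0 ≤ m := hpos g hgG
      have hs : 0 < s := div_pos (by nlinarith [mul_nonneg hc₂.le hm]) hc2'
      have hs_eq : s * (1 + c₂) = c₂ * m + t / 2 := div_mul_cancel₀ _ hc2'.ne'
      have harith : B * m ≤ n * s ^ 2 / 2 := by
        have hnt' : B * (1 + c₂) ^ 2 ≤ c₂ * (n * t) := by
          rw [div_le_iff₀ hc₂] at hnt; linarith
        have hkey : n * (s * (1 + c₂)) ^ 2 ≥ 2 * m * (c₂ * (n * t)) := by
          rw [hs_eq]; nlinarith [sq_nonneg (c₂ * m - t / 2)]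
        nlinarith [mul_le_mul_of_nonneg_left hnt' (by linarith : (0:ℝ) ≤ 2 * m),
          sq_nonneg s, mul_pos hc2' hc2']
      have hhalf := cheb' μ n hn g (hmeas g hgG) (hInt2 g hgG) (B * m)
        (hBern g hgG) s hs harith
      set A : Set (Fin n → 𝒵) := {y | m - s ≤ (n : ℝ)⁻¹ * ∑ i, g (y i)} with hAdef
      have hAmeas : MeasurableSet A := by
        have : Measurable fun y : Fin n → 𝒵 => (n : ℝ)⁻¹ * ∑ i, g (y i) :=
          (Finset.measurable_sum _ fun i _ =>
            (hmeas g hgG).comp (measurable_pi_apply i)).const_mul _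
        exact measurableSet_le measurable_const this
      have hcompl : Aᶜ = {y | (n : ℝ)⁻¹ * ∑ i, g (y i) < m - s} := by
        ext y; simp only [hAdef, Set.mem_compl_iff, Set.mem_setOf_eq, not_le]
      have hA_half : (1 : ℝ≥0∞) / 2 ≤ ν A := by
        have hsum := measure_add_measure_compl (μ := ν) hAmeas
        rw [measure_univ] at hsum
        have h1 : (1 : ℝ≥0∞) ≤ ν A + 1 / 2 :=
          hsum.symm.le.trans (add_le_add_right (by rw [hcompl]; exact hhalf) _)
        have h2 : (1 : ℝ≥0∞) - 1 / 2 ≤ ν A := tsub_le_iff_right.2 h1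
        rwa [show (1 : ℝ≥0∞) - 1 / 2 = 1 / 2 by
          rw [ENNReal.sub_half one_ne_top]] at h2
      have hsub : A ⊆ Prod.mk z ⁻¹' D := by
        intro y hy
        have hy' : m - s ≤ (n : ℝ)⁻¹ * ∑ i, g (y i) := hy
        simp only [Set.mem_preimage, hDdef, Set.mem_setOf_eq]
        refine le_trans ?_ (Finset.le_sup' _ hgG)
        have h2 : (1 + c₂) * (m - s) ≤ (1 + c₂) * ((n : ℝ)⁻¹ * ∑ i, g (y i)) :=
          mul_le_mul_of_nonneg_left hy' hc2'.le
        have h3 : (1 + c₂) * (m - s) = m - t / 2 := by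
          rw [mul_sub, mul_comm (1 + c₂) s, hs_eq]; ring
        linarith
      exact le_trans hA_half (measure_mono hsub)
    calc ν E = ∫⁻ _ in E, 1 ∂ν := (setLIntegral_one E).symm
      _ ≤ ∫⁻ z in E, 2 * ν (Prod.mk z ⁻¹' D) ∂ν := by
          refine setLIntegral_mono ((measurable_measure_prodMk_left hD).const_mul 2) ?_
          intro z hz
          have := key z hz
          calc (1 : ℝ≥0∞) = 2 * (1 / 2) := by
                rw [ENNReal.mul_div_cancel two_ne_zero ENNReal.ofNat_ne_top]
            _ ≤ 2 * ν (Prod.mk z ⁻¹' D) := mul_le_mul_right this 2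
      _ ≤ ∫⁻ z, 2 * ν (Prod.mk z ⁻¹' D) ∂ν := setLIntegral_le_lintegral _ _
      _ = 2 * ∫⁻ z, ν (Prod.mk z ⁻¹' D) ∂ν :=
          lintegral_const_mul 2 (measurable_measure_prodMk_left hD)
      _ = 2 * (ν.prod ν) D := by rw [Measure.prod_apply hD]
  · -- degenerate case t ≤ 0
    push_neg at ht
    have hB : B ≤ 0 := by
      have h1 : (0 : ℝ) < (1 + c₂) ^ 2 / c₂ := by positivity
      have h2 : B * ((1 + c₂) ^ 2 / c₂) ≤ n * t := by
        rw [← mul_div_assoc]; exact hnt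
      nlinarith [mul_nonpos_of_nonneg_of_nonpos hn'.le ht]
    have hg0 : ∀ g ∈ G, ∀ᵐ x ∂μ, g x = 0 := by
      intro g hgG
      have h1 : ∫ x, g x ^ 2 ∂μ ≤ 0 :=
        (hBern g hgG).trans (mul_nonpos_of_nonpos_of_nonneg hB (hpos g hgG))
      have h2 : ∫ x, g x ^ 2 ∂μ = 0 :=
        le_antisymm h1 (integral_nonneg fun x => sq_nonneg _)
      have h3 := (integral_eq_zero_iff_of_nonneg (fun x => sq_nonneg (g x))
        (hInt2 g hgG)).1 h2
      filter_upwards [h3] with x hx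
      exact pow_eq_zero_iff (n := 2) (by norm_num) |>.1 hx
    have hbad : ∀ᵐ y ∂ν, ∀ g ∈ G, ∀ i : Fin n, g (y i) = 0 := by
      simp only [← Finset.mem_coe]
      rw [ae_ball_iff G.countable_toSet]
      intro g hgG
      rw [Finset.mem_coe] at hgG
      rw [ae_all_iff]
      intro i
      exact (Measure.tendsto_eval_ae_ae (μ := fun _ : Fin n => μ) (i := i)).eventually (hg0 g hgG)
    set P : (Fin n → 𝒵) → Prop := fun y => ∀ g ∈ G, ∀ i : Fin n, g (y i) = 0 with hP
    have hDsup : {p : (Fin n → 𝒵) × (Fin n → 𝒵) | P p.1 ∧ P p.2} ⊆ D := by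
      rintro ⟨z, y⟩ ⟨h1, h2⟩
      obtain ⟨g₀, hg₀⟩ := hG
      simp only [hDdef, Set.mem_setOf_eq]
      refine le_trans ?_ (Finset.le_sup' _ hg₀)
      have e1 : ∑ i, g₀ (y i) = 0 := Finset.sum_eq_zero fun i _ => h2 g₀ hg₀ i
      have e2 : ∑ i, g₀ (z i) = 0 := Finset.sum_eq_zero fun i _ => h1 g₀ hg₀ i
      rw [e1, e2]
      simp
      linarith
    have hDc : (ν.prod ν) ({p : (Fin n → 𝒵) × (Fin n → 𝒵) | P p.1 ∧ P p.2}ᶜ) = 0 := by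
      have hsub : ({p : (Fin n → 𝒵) × (Fin n → 𝒵) | P p.1 ∧ P p.2}ᶜ) ⊆
          ({y | ¬ P y} ×ˢ Set.univ) ∪ (Set.univ ×ˢ {y | ¬ P y}) := by
        rintro ⟨z, y⟩ hp
        simp only [Set.mem_compl_iff, Set.mem_setOf_eq, not_and_or] at hp
        rcases hp with h | h
        · exact Or.inl ⟨h, Set.mem_univ _⟩
        · exact Or.inr ⟨Set.mem_univ _, h⟩
      have hz : ν {y | ¬ P y} = 0 := ae_iff.1 hbad
      refine measure_mono_null hsub ?_
      refine measure_union_null ?_ ?_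
      · rw [Measure.prod_prod, hz, zero_mul]
      · rw [Measure.prod_prod, hz, mul_zero]
    have hD1 : (1 : ℝ≥0∞) ≤ (ν.prod ν) D := by
      have h1 : (1 : ℝ≥0∞) = (ν.prod ν) Set.univ := measure_univ.symm
      have h2 : (Set.univ : Set ((Fin n → 𝒵) × (Fin n → 𝒵))) ⊆
          {p | P p.1 ∧ P p.2} ∪ ({p | P p.1 ∧ P p.2}ᶜ) := by
        intro p _; exact (em _).imp id id
      calc (1 : ℝ≥0∞) = (ν.prod ν) Set.univ := h1
        _ ≤ (ν.prod ν) ({p | P p.1 ∧ P p.2}) + (ν.prod ν) ({p | P p.1 ∧ P p.2}ᶜ) :=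
            le_trans (measure_mono h2) (measure_union_le _ _)
        _ = (ν.prod ν) ({p | P p.1 ∧ P p.2}) := by rw [hDc, add_zero]
        _ ≤ (ν.prod ν) D := measure_mono hDsup
    calc ν E ≤ 1 := prob_le_one
      _ ≤ 2 * (ν.prod ν) D := by
          calc (1 : ℝ≥0∞) ≤ 2 * 1 := by norm_num
            _ ≤ 2 * (ν.prod ν) D := mul_le_mul_right hD1 2
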